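/- (Uniqueness of the scaling class) Let (X, μ) be a probability space and T : X → X a measure-preserving map. If (c_n) and (c'_n) are both scaling sequences for T, then 0 < liminf_{n→∞} c_n/c'_n ≤ limsup_{n→∞} c_n/c'_n < ∞; that is, any two scaling sequences for T are equivalent. -/

import Mathlib

open MeasureTheory Filter Set
open scoped ENNReal

/-- Shannon entropy of a finite measurable partition, encoded as a map `f : X → F`
into a finite set, with respect to the measure `μ` (convention `0 log 0 = 0`). -/
noncomputable def shannonEntropy {X : Type*} [MeasurableSpace X] (μ : Measure X)
    {F : Type*} [Fintype F] (f : X → F) : ℝ :=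
  -∑ a : F, (μ (f ⁻¹' {a})).toReal * Real.log (μ (f ⁻¹' {a})).toReal

/-- `H(ξ_T^n)`: the Shannon entropy of the joint partition
`x ↦ (f x, f (T x), …, f (T^[n-1] x))`. -/
noncomputable def jointH {X : Type*} [MeasurableSpace X] (μ : Measure X)
    (T : X → X) {F : Type*} [Fintype F] (f : X → F) (n : ℕ) : ℝ :=
  shannonEntropy μ (fun x => (fun i : Fin n => f (T^[(i : ℕ)] x)))

/-- The `ε`-entropy `H_ε(f)`: the infimum, over measurable sets `A` with
`μ A > 1 − ε`, of the Shannon entropy of `f` with respect to the normalized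
restriction of `μ` to `A`. -/
noncomputable def epsEntropy {X : Type*} [MeasurableSpace X] (μ : Measure X)
    {F : Type*} [Fintype F] (f : X → F) (ε : ℝ) : ℝ :=
  sInf {x : ℝ | ∃ A : Set X, MeasurableSet A ∧ ENNReal.ofReal (1 - ε) < μ A ∧
    x = shannonEntropy ((μ A)⁻¹ • μ.restrict A) f}

/-- The joint partition map `ξ_T^n : x ↦ (f x, f (T x), …, f (T^[n-1] x))`. -/
def jointMap {X F : Type*} (T : X → X) (f : X → F) (n : ℕ) : X → (Fin n → F) :=
  fun x => (fun i : Fin n => f (T^[(i : ℕ)] x))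

/-- `(c_n)` is a scaling sequence for `T`: the `c_n` are positive (for `n ≥ 1`);
for every finite partition `f`, `lim_{ε→0} limsup_n H_ε(ξ_T^n)/c_n < ∞`; and there
is a finite partition `f` with `lim_{ε→0} liminf_n H_ε(ξ_T^n)/c_n > 0`. Since
`H_ε` is nonincreasing in `ε`, the limits as `ε → 0⁺` are the suprema over
`ε ∈ (0,1)`; all quantities are computed in `[0,∞]`. -/
def IsScalingSeq {X : Type*} [MeasurableSpace X] (μ : Measure X) (T : X → X)
    (c : ℕ → ℝ) : Prop :=
  (∀ n : ℕ, 1 ≤ n → 0 < c n) ∧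
  (∀ (k : ℕ) (f : X → Fin k), Measurable f →
    (⨆ ε ∈ Set.Ioo (0 : ℝ) 1,
      Filter.limsup
        (fun n : ℕ => ENNReal.ofReal (epsEntropy μ (jointMap T f n) ε / c n))
        Filter.atTop) < ⊤) ∧
  (∃ (k : ℕ) (f : X → Fin k), Measurable f ∧
    0 < ⨆ ε ∈ Set.Ioo (0 : ℝ) 1,
      Filter.liminf
        (fun n : ℕ => ENNReal.ofReal (epsEntropy μ (jointMap T f n) ε / c n))
        Filter.atTop)

lemma aux_ratio (c c' g : ℕ → ℝ)
    (hc : ∀ᶠ n in atTop, 0 < c n) (hc' : ∀ᶠ n in atTop, 0 < c' n)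
    (h1 : 0 < Filter.liminf (fun n => ENNReal.ofReal (g n / c n)) atTop)
    (h2 : Filter.limsup (fun n => ENNReal.ofReal (g n / c' n)) atTop < ⊤) :
    ∃ R : ℝ, 0 < R ∧ ∀ᶠ n in atTop, c n / c' n ≤ R := by
  obtain ⟨b, hb0, hb⟩ := exists_between h1
  obtain ⟨M, hM, hMtop⟩ := exists_between h2
  have hbtop : b ≠ ⊤ := (hb.trans_le le_top).ne
  have hB : 0 < b.toReal := ENNReal.toReal_pos hb0.ne' hbtop
  have hM0 : 0 < M := lt_of_le_of_lt zero_le hM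
  have hMR : 0 < M.toReal := ENNReal.toReal_pos hM0.ne' hMtop.ne
  have hev1 := Filter.eventually_lt_of_lt_liminf hb
  have hev2 := Filter.eventually_lt_of_limsup_lt hM
  refine ⟨M.toReal / b.toReal, by positivity, ?_⟩
  filter_upwards [hc, hc', hev1, hev2] with n h1n h2n h3n h4n
  have h3 : b.toReal < g n / c n := (ENNReal.lt_ofReal_iff_toReal_lt hbtop).mp h3n
  have hg : 0 < g n := by
    have h := hB.trans h3
    rcases div_pos_iff.mp h with ⟨h, _⟩ | ⟨_, h⟩
    · exact h
    · linarith
  have h4 : g n / c' n < M.toReal :=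
    (ENNReal.ofReal_lt_iff_lt_toReal (by positivity) hMtop.ne).mp h4n
  rw [div_le_div_iff₀ h2n hB]
  have hbc : b.toReal * c n < g n := (lt_div_iff₀ h1n).mp h3
  have hgM : g n < M.toReal * c' n := (div_lt_iff₀ h2n).mp h4
  nlinarith

/-- Uniqueness of the scaling class: any two scaling sequences for
the same measure-preserving map are equivalent:
`0 < liminf c_n/c'_n ≤ limsup c_n/c'_n < ∞`. -/
theorem scaling_sequences_equivalent {X : Type*} [MeasurableSpace X] (μ : Measure X)
    [IsProbabilityMeasure μ] (T : X → X) (hT : MeasurePreserving T μ μ)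
    (c c' : ℕ → ℝ) (hc : IsScalingSeq μ T c) (hc' : IsScalingSeq μ T c') :
    0 < Filter.liminf (fun n : ℕ => ENNReal.ofReal (c n / c' n)) Filter.atTop ∧
    Filter.liminf (fun n : ℕ => ENNReal.ofReal (c n / c' n)) Filter.atTop ≤
      Filter.limsup (fun n : ℕ => ENNReal.ofReal (c n / c' n)) Filter.atTop ∧
    Filter.limsup (fun n : ℕ => ENNReal.ofReal (c n / c' n)) Filter.atTop < ⊤ := by
  have hcev : ∀ᶠ n in atTop, 0 < c n := by
    filter_upwards [eventually_ge_atTop 1] with n hn using hc.1 n hn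
  have hc'ev : ∀ᶠ n in atTop, 0 < c' n := by
    filter_upwards [eventually_ge_atTop 1] with n hn using hc'.1 n hn
  -- witness for c: liminf H_ε/c > 0
  obtain ⟨k1, f1, hf1, hw1⟩ := hc.2.2
  simp only [lt_iSup_iff] at hw1
  obtain ⟨ε1, hε1, hlim1⟩ := hw1
  -- bound for c' on partition f1
  have hbd1 : Filter.limsup
      (fun n : ℕ => ENNReal.ofReal (epsEntropy μ (jointMap T f1 n) ε1 / c' n))
      Filter.atTop < ⊤ :=
    lt_of_le_of_lt
      (le_iSup₂ (f := fun ε (_ : ε ∈ Set.Ioo (0:ℝ) 1) =>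
        Filter.limsup (fun n : ℕ =>
          ENNReal.ofReal (epsEntropy μ (jointMap T f1 n) ε / c' n)) Filter.atTop) ε1 hε1)
      (hc'.2.1 k1 f1 hf1)
  obtain ⟨R, hR, hRev⟩ := aux_ratio c c' _ hcev hc'ev hlim1 hbd1
  -- witness for c'
  obtain ⟨k2, f2, hf2, hw2⟩ := hc'.2.2
  simp only [lt_iSup_iff] at hw2
  obtain ⟨ε2, hε2, hlim2⟩ := hw2
  have hbd2 : Filter.limsup
      (fun n : ℕ => ENNReal.ofReal (epsEntropy μ (jointMap T f2 n) ε2 / c n))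
      Filter.atTop < ⊤ :=
    lt_of_le_of_lt
      (le_iSup₂ (f := fun ε (_ : ε ∈ Set.Ioo (0:ℝ) 1) =>
        Filter.limsup (fun n : ℕ =>
          ENNReal.ofReal (epsEntropy μ (jointMap T f2 n) ε / c n)) Filter.atTop) ε2 hε2)
      (hc.2.1 k2 f2 hf2)
  obtain ⟨R', hR', hR'ev⟩ := aux_ratio c' c _ hc'ev hcev hlim2 hbd2
  have hlower : ∀ᶠ n in atTop, ENNReal.ofReal (1 / R') ≤ ENNReal.ofReal (c n / c' n) := by
    filter_upwards [hcev, hc'ev, hR'ev] with n h1 h2 h3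
    apply ENNReal.ofReal_le_ofReal
    rw [div_le_div_iff₀ hR' h2]
    have : c' n ≤ R' * c n := (div_le_iff₀ h1).mp h3
    nlinarith
  have hupper : ∀ᶠ n in atTop, ENNReal.ofReal (c n / c' n) ≤ ENNReal.ofReal R := by
    filter_upwards [hRev] with n h
    exact ENNReal.ofReal_le_ofReal h
  refine ⟨?_, Filter.liminf_le_limsup, ?_⟩
  · exact lt_of_lt_of_le (ENNReal.ofReal_pos.mpr (by positivity))
      (Filter.le_liminf_of_le (by isBoundedDefault) hlower)
  · exact lt_of_le_of_lt (Filter.limsup_le_of_le (by isBoundedDefault) hupper)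
      (ENNReal.ofReal_lt_top)
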